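/- Fix any subset K ⊆ ℕ and let f_K : ℕ → ℕ be the piecewise-defined function associated to K. Then f_K is superadditive: f_K(m) + f_K(n) ≤ f_K(m + n) for all m, n ∈ ℕ. -/

import Mathlib

/-- The index `n ≥ 1` of the interval `I_n = (10^{(n-1)²}, 10^{n²}]` containing `x`
(for `x ≥ 2`): the least `n ≥ 1` with `x ≤ 10 ^ (n ^ 2)`.  For `x ∈ I_n` this equals `n`. -/
noncomputable def intervalIdx (x : ℕ) : ℕ :=
  sInf {n : ℕ | 1 ≤ n ∧ x ≤ 10 ^ (n ^ 2)}

/-- The function `f_K` associated to a set `K ⊆ ℕ`: `f_K(0) = f_K(1) = 0`, and for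
`x ∈ I_n`, `f_K(x) = 10^{n³}·x²` if `n ∈ K` and `f_K(x) = 10^{n³+2n²}·x²` if `n ∉ K`. -/
noncomputable def fK (K : Set ℕ) (x : ℕ) : ℕ :=
  letI := Classical.dec (intervalIdx x ∈ K)
  if x ≤ 1 then 0
  else if intervalIdx x ∈ K then 10 ^ (intervalIdx x) ^ 3 * x ^ 2
  else 10 ^ ((intervalIdx x) ^ 3 + 2 * (intervalIdx x) ^ 2) * x ^ 2

noncomputable def cfAux (K : Set ℕ) (n : ℕ) : ℕ :=
  letI := Classical.dec (n ∈ K)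
  if n ∈ K then 10 ^ n ^ 3 else 10 ^ (n ^ 3 + 2 * n ^ 2)

lemma idxSet_nonempty (x : ℕ) : {n : ℕ | 1 ≤ n ∧ x ≤ 10 ^ (n ^ 2)}.Nonempty := by
  refine ⟨max 1 x, le_max_left _ _, ?_⟩
  have h1 : x ≤ max 1 x := le_max_right _ _
  have h2 : max 1 x < 10 ^ (max 1 x) := Nat.lt_pow_self (by norm_num)
  have h3 : (10:ℕ) ^ (max 1 x) ≤ 10 ^ ((max 1 x) ^ 2) := by
    apply Nat.pow_le_pow_right (by norm_num)
    nlinarith [le_max_left 1 x]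
  omega

lemma idx_pos (x : ℕ) : 1 ≤ intervalIdx x :=
  (Nat.sInf_mem (idxSet_nonempty x)).1

lemma le_pow_idx (x : ℕ) : x ≤ 10 ^ (intervalIdx x) ^ 2 :=
  (Nat.sInf_mem (idxSet_nonempty x)).2

lemma idx_mono {x y : ℕ} (h : x ≤ y) : intervalIdx x ≤ intervalIdx y :=
  Nat.sInf_le ⟨idx_pos y, le_trans h (le_pow_idx y)⟩

lemma cfAux_mono (K : Set ℕ) {a b : ℕ} (ha : 1 ≤ a) (hab : a ≤ b) :
    cfAux K a ≤ cfAux K b := by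
  rcases eq_or_lt_of_le hab with rfl | hlt
  · exact le_rfl
  · have h1 : cfAux K a ≤ 10 ^ (a ^ 3 + 2 * a ^ 2) := by
      unfold cfAux
      split_ifs
      · exact Nat.pow_le_pow_right (by norm_num) (by omega)
      · exact le_rfl
    have h2 : (10:ℕ) ^ b ^ 3 ≤ cfAux K b := by
      unfold cfAux
      split_ifs
      · exact le_rfl
      · exact Nat.pow_le_pow_right (by norm_num) (by omega)
    have hb3 : (a+1)^3 ≤ b^3 := Nat.pow_le_pow_left (by omega) 3
    have hexp : a ^ 3 + 2 * a ^ 2 ≤ b ^ 3 := by nlinarith [sq_nonneg a]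
    calc cfAux K a ≤ 10 ^ (a ^ 3 + 2 * a ^ 2) := h1
      _ ≤ 10 ^ b ^ 3 := Nat.pow_le_pow_right (by norm_num) hexp
      _ ≤ cfAux K b := h2

lemma fK_eq (K : Set ℕ) {x : ℕ} (h : 2 ≤ x) :
    fK K x = cfAux K (intervalIdx x) * x ^ 2 := by
  unfold fK cfAux
  rw [if_neg (by omega)]
  split_ifs <;> ring

lemma fK_le_one (K : Set ℕ) {x : ℕ} (h : x ≤ 1) : fK K x = 0 := by
  unfold fK; rw [if_pos h]

lemma fK_mono (K : Set ℕ) {a b : ℕ} (h : a ≤ b) : fK K a ≤ fK K b := by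
  by_cases ha : a ≤ 1
  · rw [fK_le_one K ha]; exact Nat.zero_le _
  · rw [fK_eq K (by omega), fK_eq K (by omega)]
    exact Nat.mul_le_mul (cfAux_mono K (idx_pos a) (idx_mono h))
      (Nat.pow_le_pow_left h 2)

/-- for any `K ⊆ ℕ`, the function `f_K` is superadditive. -/
theorem fK_superadditive (K : Set ℕ) :
    ∀ m n : ℕ, fK K m + fK K n ≤ fK K (m + n) := by
  intro m n
  by_cases hm : m ≤ 1
  · rw [fK_le_one K hm]
    simpa using fK_mono K (Nat.le_add_left n m)
  by_cases hn : n ≤ 1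
  · rw [fK_le_one K hn]
    simpa using fK_mono K (Nat.le_add_right m n)
  · rw [fK_eq K (by omega), fK_eq K (by omega), fK_eq K (show 2 ≤ m + n by omega)]
    have h1 : cfAux K (intervalIdx m) ≤ cfAux K (intervalIdx (m + n)) :=
      cfAux_mono K (idx_pos m) (idx_mono (Nat.le_add_right m n))
    have h2 : cfAux K (intervalIdx n) ≤ cfAux K (intervalIdx (m + n)) :=
      cfAux_mono K (idx_pos n) (idx_mono (Nat.le_add_left n m))
    calc cfAux K (intervalIdx m) * m ^ 2 + cfAux K (intervalIdx n) * n ^ 2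
        ≤ cfAux K (intervalIdx (m+n)) * m ^ 2 + cfAux K (intervalIdx (m+n)) * n ^ 2 :=
          Nat.add_le_add (Nat.mul_le_mul_right _ h1) (Nat.mul_le_mul_right _ h2)
      _ = cfAux K (intervalIdx (m+n)) * (m ^ 2 + n ^ 2) := by ring
      _ ≤ cfAux K (intervalIdx (m+n)) * (m + n) ^ 2 := Nat.mul_le_mul_left _ (by nlinarith)
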